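/- Let m ≥ 5 be an integer and n = 2^m. Then there exists a set Ω ⊆ ℤ^n with #Ω ≤ 2^{n/2 - 1} such that for every real sequence (x_i)_{i=1}^n whose non-increasing rearrangement (x_i*) satisfies x*_{⌊2^{j-1}⌋+1} ≤ 2^{ψ(m,j)} for all j ∈ {0,1,...,m-5}, where ψ(m,j) = 2^{m-j-4}(m-j)^{-2}, there exists z ∈ Ω with max_{1≤i≤n} |x_i - z_i| ≤ 4. -/

import Mathlib

open Real Finset

noncomputable def decRearrange {n : ℕ} (x : Fin n → ℝ) : Fin n → ℝ :=
  fun k => |x (Tuple.sort (fun j => |x j|) k.rev)|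

lemma drank_le {n : ℕ} (x : Fin n → ℝ) (k : Fin n) :
    (univ.filter fun i => decRearrange x k < |x i|).card ≤ (k : ℕ) := by
  classical
  set f : Fin n → ℝ := fun j => |x j| with hf
  set σ := Tuple.sort f with hσ
  have hmono : Monotone (f ∘ σ) := Tuple.monotone_sort f
  have h1 : (univ.filter fun i => decRearrange x k < |x i|).card ≤ (Finset.Ioi k.rev).card := by
    apply Finset.card_le_card_of_injOn (fun i => σ.symm i)
    · intro i hi
      simp only [Finset.mem_coe, mem_filter, mem_univ, true_and] at hi
      simp only [Finset.mem_coe, Finset.mem_Ioi]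
      by_contra hle
      push_neg at hle
      have := hmono hle
      simp only [Function.comp_apply, Equiv.apply_symm_apply] at this
      have : |x i| ≤ decRearrange x k := this
      linarith
    · intro a _ b _ hab
      simpa using congrArg σ hab
  have h2 : (Finset.Ioi k.rev).card = n - 1 - (k.rev : ℕ) := Fin.card_Ioi k.rev
  have h3 : ((k.rev : ℕ)) = n - (k + 1) := Fin.val_rev k
  have hk := k.isLt
  omega

lemma abs_le_decRearrange_zero {n : ℕ} (hn : 0 < n) (x : Fin n → ℝ) (i : Fin n) :
    |x i| ≤ decRearrange x ⟨0, hn⟩ := by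
  have h := drank_le x ⟨0, hn⟩
  simp only [Nat.le_zero, Finset.card_eq_zero, Finset.filter_eq_empty_iff] at h
  have := h (Finset.mem_univ i)
  linarith [not_lt.mp this]

lemma filter_abs_card_le {n : ℕ} (x : Fin n → ℝ) (b : ℝ) (k : Fin n)
    (hk : decRearrange x k ≤ b) :
    (univ.filter fun i => b < |x i|).card ≤ (k : ℕ) := by
  refine le_trans (Finset.card_le_card ?_) (drank_le x k)
  intro i hi
  simp only [Finset.mem_filter, Finset.mem_univ, true_and] at hi ⊢
  exact lt_of_le_of_lt hk hi

lemma round_eight (y : ℝ) : |y - ((8 * round (y / 8) : ℤ) : ℝ)| ≤ 4 := by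
  have h := abs_sub_round (y / 8)
  have : y - ((8 * round (y / 8) : ℤ) : ℝ) = 8 * (y / 8 - (round (y / 8) : ℝ)) := by
    push_cast; ring
  rw [this, abs_mul]
  rw [abs_of_nonneg (by norm_num : (0:ℝ) ≤ 8)]
  linarith

lemma two_pow_sub_sq_mono {a b : ℕ} (h5 : 5 ≤ a) (hab : a ≤ b) :
    2 ^ (a - 4) * b ^ 2 ≤ 2 ^ (b - 4) * a ^ 2 := by
  induction b, hab using Nat.le_induction with
  | base => rfl
  | succ b hb ih =>
    have hb5 : 5 ≤ b := le_trans h5 hb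
    have key : (b + 1) ^ 2 ≤ 2 * b ^ 2 := by nlinarith
    calc 2 ^ (a - 4) * (b + 1) ^ 2 ≤ 2 ^ (a - 4) * (2 * b ^ 2) :=
      Nat.mul_le_mul_left _ key
    _ = 2 * (2 ^ (a - 4) * b ^ 2) := by ring
    _ ≤ 2 * (2 ^ (b - 4) * a ^ 2) := Nat.mul_le_mul_left _ ih
    _ = 2 ^ (b + 1 - 4) * a ^ 2 := by
        rw [show b + 1 - 4 = (b - 4) + 1 by omega, pow_succ]; ring

lemma natCast_div_lt_add_one (a b : ℕ) (hb : 0 < b) : (a : ℝ) / (b : ℝ) ≤ ((a / b : ℕ) : ℝ) + 1 := by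
  rw [div_le_iff₀ (by exact_mod_cast hb)]
  have h : a ≤ (a / b + 1) * b := by
    have h1 := Nat.div_add_mod a b
    have h2 := Nat.mod_lt a hb
    nlinarith
  calc (a : ℝ) ≤ (((a / b + 1) * b : ℕ) : ℝ) := by exact_mod_cast h
  _ = (((a / b : ℕ) : ℝ) + 1) * (b : ℝ) := by push_cast; ring

noncomputable def Bfun (m j : ℕ) : ℝ :=
  (2 : ℝ) ^ ((2 ^ (m - j - 4) : ℝ) / ((m : ℝ) - (j : ℝ)) ^ 2)

def gfun (m j : ℕ) : ℕ := 2 ^ (m - j - 4) / (m - j) ^ 2 + 1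

lemma cast_sub_eq {m j : ℕ} (hj : j ≤ m) : (m : ℝ) - (j : ℝ) = ((m - j : ℕ) : ℝ) := by
  push_cast [Nat.cast_sub hj]; ring

lemma Bfun_pos (m j : ℕ) : 0 < Bfun m j := Real.rpow_pos_of_pos (by norm_num) _

lemma Bfun_anti {m j j' : ℕ} (hm : 5 ≤ m) (hjj : j ≤ j') (hj' : j' ≤ m - 5) :
    Bfun m j' ≤ Bfun m j := by
  have hj'm : j' ≤ m := by omega
  have hjm : j ≤ m := by omega
  apply Real.rpow_le_rpow_of_exponent_le (by norm_num)
  rw [cast_sub_eq hj'm, cast_sub_eq hjm]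
  have ht' : (0:ℝ) < ((m - j' : ℕ) : ℝ) := by
    have : 0 < m - j' := by omega
    exact_mod_cast this
  have ht : (0:ℝ) < ((m - j : ℕ) : ℝ) := by
    have : 0 < m - j := by omega
    exact_mod_cast this
  rw [div_le_div_iff₀ (by positivity) (by positivity)]
  have key : 2 ^ (m - j' - 4) * (m - j) ^ 2 ≤ 2 ^ (m - j - 4) * (m - j') ^ 2 := by
    have h1 : m - j' - 4 = (m - j') - 4 := rfl
    have := two_pow_sub_sq_mono (a := m - j') (b := m - j) (by omega) (by omega)
    exact this
  calc (2:ℝ) ^ (m - j' - 4) * ((m - j : ℕ) : ℝ) ^ 2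
      = ((2 ^ (m - j' - 4) * (m - j) ^ 2 : ℕ) : ℝ) := by push_cast; ring
  _ ≤ ((2 ^ (m - j - 4) * (m - j') ^ 2 : ℕ) : ℝ) := by exact_mod_cast key
  _ = (2:ℝ) ^ (m - j - 4) * ((m - j' : ℕ) : ℝ) ^ 2 := by push_cast; ring

lemma Bfun_le_pow {m j : ℕ} (hm : 5 ≤ m) (hj : j ≤ m - 5) :
    Bfun m j ≤ (2 : ℝ) ^ (gfun m j : ℕ) := by
  have hjm : j ≤ m := by omega
  have hpos : 0 < (m - j) ^ 2 := by
    have : 0 < m - j := by omega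
    positivity
  have h1 : (2 ^ (m - j - 4) : ℝ) / ((m : ℝ) - (j : ℝ)) ^ 2 ≤ ((gfun m j : ℕ) : ℝ) := by
    rw [cast_sub_eq hjm]
    have h2 := natCast_div_lt_add_one (2 ^ (m - j - 4)) ((m - j) ^ 2) hpos
    calc (2 ^ (m - j - 4) : ℝ) / ((m - j : ℕ) : ℝ) ^ 2
        = ((2 ^ (m - j - 4) : ℕ) : ℝ) / (((m - j) ^ 2 : ℕ) : ℝ) := by push_cast; ring
    _ ≤ ((2 ^ (m - j - 4) / (m - j) ^ 2 : ℕ) : ℝ) + 1 := h2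
    _ = ((gfun m j : ℕ) : ℝ) := by rw [gfun]; push_cast; ring
  calc Bfun m j ≤ (2:ℝ) ^ ((gfun m j : ℕ) : ℝ) :=
    Real.rpow_le_rpow_of_exponent_le (by norm_num) h1
  _ = (2:ℝ) ^ (gfun m j : ℕ) := Real.rpow_natCast _ _

lemma rpow_two_eq_four : (2:ℝ) ^ ((2:ℕ) : ℝ) = 4 := by
  rw [Real.rpow_natCast]; norm_num

lemma Bfun_top_lt {m : ℕ} (hm : 13 ≤ m) : Bfun m (m - 5) < 4 := by
  have h1 : m - (m - 5) - 4 = 1 := by omega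
  have h2 : (m : ℝ) - ((m - 5 : ℕ) : ℝ) = 5 := by
    push_cast [Nat.cast_sub (by omega : 5 ≤ m)]; ring
  rw [Bfun, h1, h2]
  have : (2 : ℝ) ^ (1 : ℕ) / (5:ℝ) ^ 2 < ((2:ℕ) : ℝ) := by norm_num
  calc (2:ℝ) ^ ((2 : ℝ) ^ (1:ℕ) / (5:ℝ) ^ 2) < (2:ℝ) ^ (((2:ℕ)):ℝ) :=
    Real.rpow_lt_rpow_of_exponent_lt (by norm_num) this
  _ = 4 := rpow_two_eq_four

lemma Bfun_small {m : ℕ} (hm : 5 ≤ m) (hm' : m ≤ 12) : Bfun m 0 ≤ 4 := by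
  rw [Bfun]
  simp only [Nat.cast_zero, sub_zero, Nat.sub_zero]
  have h1 : (2 ^ (m - 4) : ℝ) / ((m : ℝ)) ^ 2 ≤ ((2:ℕ):ℝ) := by
    have hmpos : (0:ℝ) < (m:ℝ) := by exact_mod_cast (by omega : 0 < m)
    rw [div_le_iff₀ (by positivity)]
    interval_cases m <;> norm_num
  calc (2:ℝ) ^ ((2 ^ (m - 4) : ℝ) / ((m:ℝ)) ^ 2) ≤ (2:ℝ) ^ (((2:ℕ)):ℝ) :=
    Real.rpow_le_rpow_of_exponent_le (by norm_num) h1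
  _ = 4 := rpow_two_eq_four

lemma pow_self_le_four_pow_factorial (k : ℕ) : k ^ k ≤ 4 ^ k * k.factorial := by
  have h1 : k ^ k ≤ (2 * k).descFactorial k := by
    rw [Nat.descFactorial_eq_prod_range]
    calc k ^ k = ∏ _i ∈ range k, k := by simp
    _ ≤ ∏ i ∈ range k, (2 * k - i) := by
        apply Finset.prod_le_prod'
        intro i hi
        simp only [mem_range] at hi
        omega
  have h2 : (2 * k).descFactorial k = k.factorial * (2 * k).choose k :=
    Nat.descFactorial_eq_factorial_mul_choose _ _
  have h3 : (2 * k).choose k ≤ 4 ^ k := by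
    have hs : ∑ i ∈ range (2 * k + 1), (2 * k).choose i = 2 ^ (2 * k) :=
      Nat.sum_range_choose _
    have hmem : k ∈ range (2 * k + 1) := by simp [Nat.lt_succ_iff]; omega
    have hle : (2 * k).choose k ≤ ∑ i ∈ range (2 * k + 1), (2 * k).choose i :=
      Finset.single_le_sum (fun i _ => Nat.zero_le _) hmem
    rw [hs] at hle
    calc (2 * k).choose k ≤ 2 ^ (2 * k) := hle
    _ = 4 ^ k := by rw [pow_mul]; norm_num
  calc k ^ k ≤ k.factorial * (2 * k).choose k := h2 ▸ h1
  _ ≤ k.factorial * 4 ^ k := Nat.mul_le_mul_left _ h3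
  _ = 4 ^ k * k.factorial := Nat.mul_comm _ _

lemma choose_pow2_le {m j : ℕ} (hj : j ≤ m) :
    (2 ^ m).choose (2 ^ j) ≤ 2 ^ ((m + 2 - j) * 2 ^ j) := by
  set b := 2 ^ j with hb
  have h1 : (2 ^ m).choose b * b.factorial ≤ (2 ^ m) ^ b := by
    calc (2 ^ m).choose b * b.factorial = (2 ^ m).descFactorial b := by
          rw [Nat.descFactorial_eq_factorial_mul_choose, Nat.mul_comm]
    _ ≤ (2 ^ m) ^ b := Nat.descFactorial_le_pow _ _
  have h2 : b ^ b ≤ 4 ^ b * b.factorial := pow_self_le_four_pow_factorial b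
  have key : (2 ^ m).choose b * b ^ b ≤ 4 ^ b * (2 ^ m) ^ b := by
    calc (2 ^ m).choose b * b ^ b ≤ (2 ^ m).choose b * (4 ^ b * b.factorial) :=
      Nat.mul_le_mul_left _ h2
    _ = 4 ^ b * ((2 ^ m).choose b * b.factorial) := by ring
    _ ≤ 4 ^ b * (2 ^ m) ^ b := Nat.mul_le_mul_left _ h1
  have hbb : b ^ b = 2 ^ (j * b) := by rw [hb, ← pow_mul]
  have h4 : 4 ^ b * (2 ^ m) ^ b = 2 ^ ((m + 2 - j) * b) * 2 ^ (j * b) := by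
    rw [show (4 : ℕ) = 2 ^ 2 by norm_num, ← pow_mul, ← pow_mul, ← pow_add, ← pow_add]
    congr 1
    have e1 : (m + 2 - j) * b + j * b = (m + 2) * b := by
      rw [← Nat.add_mul]; congr 1; omega
    rw [e1]; ring
  rw [hbb, h4] at key
  exact Nat.le_of_mul_le_mul_right key (by positivity)

lemma sum_two_pow_mul (c : ℕ) : ∀ J : ℕ, ∑ j ∈ range J, 2 ^ j * (c + J - j) ≤ (c + 2) * 2 ^ J := by
  intro J
  induction J with
  | zero => simp
  | succ J ih =>
    have step : ∑ j ∈ range (J + 1), 2 ^ j * (c + (J + 1) - j)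
        = (∑ j ∈ range J, 2 ^ j * (c + J - j)) + (∑ j ∈ range J, 2 ^ j) + 2 ^ J * (c + 1) := by
      rw [Finset.sum_range_succ]
      have hcg : ∀ j ∈ range J, 2 ^ j * (c + (J + 1) - j) = 2 ^ j * (c + J - j) + 2 ^ j := by
        intro j hj; simp only [mem_range] at hj
        have : c + (J + 1) - j = (c + J - j) + 1 := by omega
        rw [this, Nat.mul_add, Nat.mul_one]
      rw [Finset.sum_congr rfl hcg, Finset.sum_add_distrib,
        show c + (J + 1) - J = c + 1 by omega]
    have hgeo : ∑ j ∈ range J, (2 : ℕ) ^ j = 2 ^ J - 1 := by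
      have := Nat.geomSum_eq (le_refl 2) J
      omega
    rw [step, hgeo]
    have h2J : 1 ≤ (2:ℕ) ^ J := Nat.one_le_two_pow
    have hr : (c + 2) * 2 ^ J = 2 ^ J * (c + 1) + 2 ^ J := by ring
    calc (∑ j ∈ range J, 2 ^ j * (c + J - j)) + (2 ^ J - 1) + 2 ^ J * (c + 1)
        ≤ (c + 2) * 2 ^ J + (c + 2) * 2 ^ J := by omega
    _ = (c + 2) * 2 ^ (J + 1) := by rw [pow_succ]; ring

lemma msq_le_two_pow {m : ℕ} (hm : 13 ≤ m) : m ^ 2 + 1 ≤ 2 ^ (m - 4) := by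
  induction m with
  | zero => omega
  | succ m ih =>
    rcases Nat.lt_or_ge m 13 with h | h
    · have hm12 : m = 12 := by omega
      subst hm12; norm_num
    · have h1 := ih (by omega)
      have h2 : (m + 1) ^ 2 + 1 ≤ 2 * (m ^ 2 + 1) := by nlinarith
      have h3 : (2 : ℕ) * 2 ^ (m - 4) = 2 ^ (m + 1 - 4) := by
        rw [← pow_succ']; congr 1; omega
      calc (m + 1) ^ 2 + 1 ≤ 2 * (m ^ 2 + 1) := h2
      _ ≤ 2 * 2 ^ (m - 4) := by omega
      _ = 2 ^ (m + 1 - 4) := h3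

lemma inv_sq_telescope {t : ℝ} (ht : 6 ≤ t) : 1 / t ^ 2 ≤ 1 / (t - 1) - 1 / t := by
  rw [div_sub_div _ _ (by linarith) (by linarith : t ≠ 0)]
  have h1 : 1 * t - (t - 1) * 1 = 1 := by ring
  rw [h1, div_le_div_iff₀ (by nlinarith) (by nlinarith)]
  nlinarith

lemma sum_inv_sq_le {m : ℕ} (hm : 5 ≤ m) :
    ∑ j ∈ range (m - 5), (1 : ℝ) / (((m : ℝ) - (j : ℝ)) ^ 2) ≤ 1 / 5 := by
  set g : ℕ → ℝ := fun i => 1 / ((m : ℝ) - (i : ℝ)) with hg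
  have key : ∀ j ∈ range (m - 5), (1 : ℝ) / (((m : ℝ) - (j : ℝ)) ^ 2)
      ≤ g (j + 1) - g j := by
    intro j hj
    simp only [mem_range] at hj
    have h6 : (6 : ℝ) ≤ (m : ℝ) - (j : ℝ) := by
      have hj6 : (j : ℝ) + 6 ≤ (m : ℝ) := by exact_mod_cast Nat.cast_le.mpr (by omega : j + 6 ≤ m)
      linarith
    have := inv_sq_telescope h6
    have hgj : g (j + 1) = 1 / ((m : ℝ) - (j : ℝ) - 1) := by
      simp only [hg]; push_cast; ring_nf
    rw [hgj, hg]
    exact this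
  calc ∑ j ∈ range (m - 5), (1 : ℝ) / ((m : ℝ) - (j : ℝ)) ^ 2
      ≤ ∑ j ∈ range (m - 5), (g (j + 1) - g j) := Finset.sum_le_sum key
  _ = g (m - 5) - g 0 := Finset.sum_range_sub g (m - 5)
  _ ≤ 1 / 5 := by
      have h5 : ((m - 5 : ℕ) : ℝ) = (m : ℝ) - 5 := by
        push_cast [Nat.cast_sub hm]; ring
      have hgm : g (m - 5) = 1 / 5 := by
        simp only [hg, h5]; norm_num
      have hg0 : 0 ≤ g 0 := by
        simp only [hg, Nat.cast_zero, sub_zero]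
        have : (0:ℝ) < (m:ℝ) := by exact_mod_cast (by omega : 0 < m)
        positivity
      linarith


lemma choose_mono_left {n a b : ℕ} (hab : a ≤ b) (hb : b ≤ n / 2) :
    n.choose a ≤ n.choose b := by
  induction b with
  | zero => simp_all
  | succ b ih =>
    rcases Nat.lt_or_ge a (b + 1) with h | h
    · have h1 : n.choose a ≤ n.choose b := ih (by omega) (by omega)
      have h2 : n.choose b ≤ n.choose (b + 1) :=
        Nat.choose_le_succ_of_lt_half_left (by omega)
      omega
    · have : a = b + 1 := by omega
      subst this; rfl


theorem stmt_6 (m : ℕ) (hm : 5 ≤ m) :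
    ∃ Ω : Finset (Fin (2 ^ m) → ℤ),
      Ω.card ≤ 2 ^ (2 ^ (m - 1) - 1) ∧
      ∀ x : Fin (2 ^ m) → ℝ,
        (∀ j : ℕ, j ≤ m - 5 → ∀ k : Fin (2 ^ m),
          (k : ℕ) = (if j = 0 then 0 else 2 ^ (j - 1)) →
          decRearrange x k ≤ (2 : ℝ) ^ ((2 ^ (m - j - 4) : ℝ) / ((m : ℝ) - (j : ℝ)) ^ 2)) →
        ∃ z ∈ Ω, ∀ i : Fin (2 ^ m), |x i - (z i : ℝ)| ≤ 4 := by
  classical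
  have hnpos : 0 < 2 ^ m := Nat.pow_pos (by norm_num)
  rcases le_or_gt m 12 with hsmall | hbig
  · -- small case : Ω = {0}
    refine ⟨{0}, by simpa using Nat.one_le_two_pow, ?_⟩
    intro x hx
    refine ⟨0, Finset.mem_singleton_self 0, ?_⟩
    intro i
    have hk : decRearrange x ⟨0, hnpos⟩ ≤ Bfun m 0 :=
      hx 0 (by omega) ⟨0, hnpos⟩ (by simp)
    have h1 := abs_le_decRearrange_zero hnpos x i
    have h2 := Bfun_small hm hsmall
    simp only [Pi.zero_apply, Int.cast_zero, sub_zero]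
    linarith
  · -- big case
    have hm13 : 13 ≤ m := hbig
    set ind : ℕ → ℕ := fun j => if j = 0 then 0 else 2 ^ (j - 1) with hind
    set c : ℕ → ℝ := fun j => Bfun m j + 4 with hc
    set K : ℤ := 8 * 2 ^ (gfun m 0) with hK
    set P : (Fin (2 ^ m) → ℤ) → Prop := fun z =>
      (∀ i, (8 : ℤ) ∣ z i) ∧
        ∀ j ≤ m - 5, (Finset.univ.filter fun i => c j < |((z i : ℤ) : ℝ)|).card ≤ ind j
      with hP
    set Ω : Finset (Fin (2 ^ m) → ℤ) :=
      (Fintype.piFinset fun _ : Fin (2 ^ m) => Finset.Icc (-K) K).filter P with hΩ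
    have hcVpos : ∀ j, (0:ℝ) < c j := fun j => by
      have := Bfun_pos m j; simp only [hc]; linarith
    have hcanti : ∀ j j', j ≤ j' → j' ≤ m - 5 → c j' ≤ c j := by
      intro j j' h1 h2
      simp only [hc]
      have := Bfun_anti hm h1 h2
      linarith
    have hcle : ∀ j, j ≤ m - 5 → c j ≤ ((8 * 2 ^ (gfun m j) : ℤ) : ℝ) := by
      intro j hj
      have h1 := Bfun_le_pow hm hj
      have h2 : (1:ℝ) ≤ (2:ℝ) ^ (gfun m j) := one_le_pow₀ (by norm_num)
      push_cast
      simp only [hc]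
      linarith
    refine ⟨Ω, ?_, ?_⟩
    · -- CARDINALITY BOUND
      set V : ℕ → Finset ℤ := fun j =>
        (Finset.Icc (-(2 ^ (gfun m j) : ℤ)) (2 ^ (gfun m j))).image (fun k => 8 * k) with hV
      have hV0 : ∀ j, (0 : ℤ) ∈ V j := by
        intro j
        simp only [hV, Finset.mem_image]
        refine ⟨0, ?_, by ring⟩
        rw [Finset.mem_Icc]
        constructor <;> [simp; positivity]
      set T : ℕ → Finset (Fin (2 ^ m) → ℤ) := fun j =>
        (Fintype.piFinset fun _ : Fin (2 ^ m) => V j).filter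
          (fun f => (Finset.univ.filter fun i => f i ≠ 0).card ≤ 2 ^ j) with hT
      set Lp : ℕ → (Fin (2 ^ m) → ℤ) → (Fin (2 ^ m) → ℤ) := fun j z i =>
        if c (j + 1) < |((z i : ℤ) : ℝ)| ∧ |((z i : ℤ) : ℝ)| ≤ c j then z i else 0 with hLp
      have hΩfacts : ∀ z ∈ Ω, (∀ i, (8 : ℤ) ∣ z i) ∧ ∀ j ≤ m - 5,
          (Finset.univ.filter fun i => c j < |((z i : ℤ) : ℝ)|).card ≤ ind j := by
        intro z hz
        rw [hΩ, Finset.mem_filter] at hz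
        exact hz.2
      have habs0 : ∀ z ∈ Ω, ∀ i, |((z i : ℤ) : ℝ)| ≤ c 0 := by
        intro z hz i
        have h := (hΩfacts z hz).2 0 (by omega)
        simp only [hind, if_pos rfl, Nat.le_zero, Finset.card_eq_zero,
          Finset.filter_eq_empty_iff] at h
        exact not_lt.mp (h (Finset.mem_univ i))
      have h8le : ∀ z ∈ Ω, ∀ i, z i ≠ 0 → (8 : ℝ) ≤ |((z i : ℤ) : ℝ)| := by
        intro z hz i h0
        have hdvd := (hΩfacts z hz).1 i
        have h1 : (8 : ℤ) ≤ |z i| := Int.le_of_dvd (abs_pos.mpr h0) ((dvd_abs _ _).mpr hdvd)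
        rw [← Int.cast_abs]
        exact_mod_cast h1
      have hctop : c (m - 5) < 8 := by
        simp only [hc]
        have := Bfun_top_lt hm13
        linarith
      have hsum : ∀ z ∈ Ω, ∀ i, z i = ∑ j ∈ Finset.range (m - 5), Lp j z i := by
        intro z hz i
        by_cases h0 : z i = 0
        · simp [hLp, h0]
        · set S : Finset ℕ := (Finset.range (m - 5)).filter
            (fun j => |((z i : ℤ) : ℝ)| ≤ c j) with hS
          have hS0 : 0 ∈ S := by
            rw [hS, Finset.mem_filter]
            exact ⟨Finset.mem_range.mpr (by omega), habs0 z hz i⟩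
          have hSne : S.Nonempty := ⟨0, hS0⟩
          set j₀ := S.max' hSne with hj₀
          have hj₀S : j₀ ∈ S := S.max'_mem hSne
          rw [hS, Finset.mem_filter, Finset.mem_range] at hj₀S
          have hcond2 : |((z i : ℤ) : ℝ)| ≤ c j₀ := hj₀S.2
          have hcond1 : c (j₀ + 1) < |((z i : ℤ) : ℝ)| := by
            rcases Nat.lt_or_ge (j₀ + 1) (m - 5) with hlt | hge
            · by_contra hcon
              push_neg at hcon
              have hmem : j₀ + 1 ∈ S := by
                rw [hS, Finset.mem_filter]
                exact ⟨Finset.mem_range.mpr hlt, hcon⟩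
              have := S.le_max' _ hmem
              omega
            · have hj1 : j₀ + 1 = m - 5 := by omega
              rw [hj1]
              calc c (m - 5) < 8 := hctop
              _ ≤ |((z i : ℤ) : ℝ)| := h8le z hz i h0
          rw [Finset.sum_eq_single_of_mem j₀ (Finset.mem_range.mpr hj₀S.1)]
          · simp only [hLp]
            rw [if_pos ⟨hcond1, hcond2⟩]
          · intro j hj hne
            simp only [hLp]
            rcases Nat.lt_or_ge j j₀ with hlt | hge
            · apply if_neg
              rintro ⟨h1, -⟩
              have : c j₀ ≤ c (j + 1) := hcanti _ _ (by omega) (by omega)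
              linarith
            · apply if_neg
              rintro ⟨-, h2⟩
              have hmem : j ∈ S := by
                rw [hS, Finset.mem_filter]
                exact ⟨hj, h2⟩
              have := S.le_max' _ hmem
              omega
      have hinj : Ω.card ≤ (Fintype.piFinset fun jj : Fin (m - 5) => T (jj : ℕ)).card := by
        apply Finset.card_le_card_of_injOn (fun z => fun jj : Fin (m - 5) => Lp (jj : ℕ) z)
        · intro z hz
          have hzΩ : z ∈ Ω := hz
          rw [Finset.mem_coe, Fintype.mem_piFinset]
          intro jj
          have hjj : (jj : ℕ) < m - 5 := jj.isLt
          rw [hT, Finset.mem_filter]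
          constructor
          · rw [Fintype.mem_piFinset]
            intro i
            simp only [hLp]
            split
            · rename_i hcond
              obtain ⟨k, hk⟩ := (hΩfacts z hzΩ).1 i
              simp only [hV, Finset.mem_image]
              refine ⟨k, ?_, hk.symm⟩
              rw [Finset.mem_Icc]
              have h1 : |((z i : ℤ) : ℝ)| ≤ ((8 * 2 ^ (gfun m (jj : ℕ)) : ℤ) : ℝ) :=
                le_trans hcond.2 (hcle _ (by omega))
              rw [← Int.cast_abs] at h1
              have h2 : |z i| ≤ 8 * 2 ^ (gfun m (jj : ℕ)) := by exact_mod_cast h1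
              rw [hk, abs_mul, (by norm_num : |(8 : ℤ)| = 8)] at h2
              have h3 : |k| ≤ 2 ^ (gfun m (jj : ℕ)) := by omega
              exact abs_le.mp h3
            · exact hV0 _
          · refine le_trans (Finset.card_le_card ?_)
              (le_trans ((hΩfacts z hzΩ).2 ((jj : ℕ) + 1) (by omega)) ?_)
            · intro i hi
              simp only [Finset.mem_filter, Finset.mem_univ, true_and, hLp] at hi ⊢
              by_cases hcond : c ((jj : ℕ) + 1) < |((z i : ℤ) : ℝ)| ∧
                  |((z i : ℤ) : ℝ)| ≤ c (jj : ℕ)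
              · exact hcond.1
              · rw [if_neg hcond] at hi
                exact absurd rfl hi
            · simp only [hind]
              rw [if_neg (by omega)]
              simp
        · intro z hz z' hz' hfe
          funext i
          rw [hsum z hz i, hsum z' hz' i]
          apply Finset.sum_congr rfl
          intro j hj
          exact congrFun (congrFun hfe ⟨j, Finset.mem_range.mp hj⟩) i
      have hVcard : ∀ j, (V j).card ≤ 2 ^ (gfun m j + 2) := by
        intro j
        refine le_trans Finset.card_image_le ?_
        rw [Int.card_Icc]
        have h1 : ((2 : ℤ) ^ (gfun m j) + 1 - -2 ^ (gfun m j))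
            = ((2 * 2 ^ (gfun m j) + 1 : ℕ) : ℤ) := by push_cast; ring
        rw [h1, Int.toNat_natCast]
        have h2 : (1 : ℕ) ≤ 2 ^ (gfun m j) := Nat.one_le_two_pow
        have h3 : (2 : ℕ) ^ (gfun m j + 2) = 4 * 2 ^ (gfun m j) := by ring
        omega
      have hTcard : ∀ jj : Fin (m - 5), (T (jj : ℕ)).card
          ≤ 2 ^ (((jj : ℕ) + 1) + (m + 2 - (jj : ℕ)) * 2 ^ (jj : ℕ)
              + (gfun m (jj : ℕ) + 2) * 2 ^ (jj : ℕ)) := by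
        intro jjf
        set j := (jjf : ℕ) with hjdef
        have hjm : j < m - 5 := jjf.isLt
        set b := 2 ^ j with hb
        set Ssets : Finset (Finset (Fin (2 ^ m))) :=
          (Finset.range (b + 1)).biUnion
            (fun k => Finset.powersetCard k Finset.univ) with hSs
        have hsub : T j ⊆ Ssets.biUnion (fun S =>
            Fintype.piFinset fun i => if i ∈ S then V j else {0}) := by
          intro f hf
          rw [hT, Finset.mem_filter, Fintype.mem_piFinset] at hf
          rw [Finset.mem_biUnion]
          refine ⟨Finset.univ.filter fun i => f i ≠ 0, ?_, ?_⟩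
          · rw [hSs, Finset.mem_biUnion]
            exact ⟨_, Finset.mem_range.mpr (Nat.lt_succ_of_le hf.2),
              Finset.mem_powersetCard_univ.mpr rfl⟩
          · rw [Fintype.mem_piFinset]
            intro i
            by_cases h0 : f i = 0
            · rw [if_neg (by simp [h0]), h0]
              exact Finset.mem_singleton_self 0
            · rw [if_pos (by simp [h0])]
              exact hf.1 i
        have hScard : ∀ S ∈ Ssets, S.card ≤ b := by
          intro S hS
          rw [hSs, Finset.mem_biUnion] at hS
          obtain ⟨k, hk, hk2⟩ := hS
          rw [Finset.mem_powersetCard_univ] at hk2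
          have := Finset.mem_range.mp hk
          omega
        have hpiS : ∀ S ∈ Ssets, (Fintype.piFinset fun i : Fin (2 ^ m) =>
            if i ∈ S then V j else ({0} : Finset ℤ)).card ≤ (V j).card ^ b := by
          intro S hS
          rw [Fintype.card_piFinset]
          have heq : ∀ i : Fin (2 ^ m), (if i ∈ S then V j else ({0} : Finset ℤ)).card
              = if i ∈ S then (V j).card else 1 := by
            intro i; split <;> simp
          rw [Finset.prod_congr rfl (fun i _ => heq i),
            Finset.prod_ite_mem Finset.univ S (fun _ => (V j).card),
            Finset.univ_inter, Finset.prod_const]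
          exact Nat.pow_le_pow_right (Finset.card_pos.mpr ⟨0, hV0 j⟩) (hScard S hS)
        have hhalf : b ≤ 2 ^ m / 2 := by
          have h1 : b ≤ 2 ^ (m - 1) := Nat.pow_le_pow_right (by norm_num) (by omega)
          have h2 : 2 ^ m / 2 = 2 ^ (m - 1) := by
            rw [show m = (m - 1) + 1 by omega, pow_succ]
            simp
          omega
        have hSsetsCard : Ssets.card ≤ (b + 1) * (2 ^ m).choose b := by
          have h1 : Ssets.card ≤ ∑ k ∈ Finset.range (b + 1),
              (Finset.powersetCard k (Finset.univ : Finset (Fin (2 ^ m)))).card := by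
            rw [hSs]
            exact Finset.card_biUnion_le
          have h2 : ∑ k ∈ Finset.range (b + 1),
              (Finset.powersetCard k (Finset.univ : Finset (Fin (2 ^ m)))).card
              ≤ (Finset.range (b + 1)).card • (2 ^ m).choose b := by
            apply Finset.sum_le_card_nsmul
            intro k hk
            rw [Finset.card_powersetCard, Finset.card_univ, Fintype.card_fin]
            exact choose_mono_left (Nat.lt_succ_iff.mp (Finset.mem_range.mp hk)) hhalf
          rw [Finset.card_range, smul_eq_mul] at h2
          exact le_trans h1 h2
        calc (T j).card ≤ (Ssets.biUnion (fun S =>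
              Fintype.piFinset fun i => if i ∈ S then V j else {0})).card :=
              Finset.card_le_card hsub
        _ ≤ ∑ S ∈ Ssets, (Fintype.piFinset fun i : Fin (2 ^ m) =>
              if i ∈ S then V j else ({0} : Finset ℤ)).card := Finset.card_biUnion_le
        _ ≤ ∑ _S ∈ Ssets, (V j).card ^ b := Finset.sum_le_sum hpiS
        _ = Ssets.card * (V j).card ^ b := by rw [Finset.sum_const, smul_eq_mul]
        _ ≤ ((b + 1) * (2 ^ m).choose b) * (V j).card ^ b :=
            Nat.mul_le_mul_right _ hSsetsCard
        _ ≤ (2 ^ (j + 1) * 2 ^ ((m + 2 - j) * b)) * (2 ^ (gfun m j + 2)) ^ b := by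
            apply Nat.mul_le_mul
            · apply Nat.mul_le_mul
              · have h1 : (1 : ℕ) ≤ 2 ^ j := Nat.one_le_two_pow
                have h2 : (2 : ℕ) ^ (j + 1) = 2 * 2 ^ j := by rw [pow_succ]; ring
                omega
              · exact choose_pow2_le (by omega)
            · exact Nat.pow_le_pow_left (hVcard j) b
        _ = 2 ^ ((j + 1) + (m + 2 - j) * b + (gfun m j + 2) * b) := by
            rw [← pow_mul, ← pow_add, ← pow_add]
      have hsumE : ∑ j ∈ Finset.range (m - 5),
          ((j + 1) + (m + 2 - j) * 2 ^ j + (gfun m j + 2) * 2 ^ j) ≤ 2 ^ (m - 1) - 1 := by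
        have hsplit : ∀ j ∈ Finset.range (m - 5),
            (j + 1) + (m + 2 - j) * 2 ^ j + (gfun m j + 2) * 2 ^ j
            = ((j + 1) + (m + 5 - j) * 2 ^ j) + (2 ^ (m - j - 4) / (m - j) ^ 2) * 2 ^ j := by
          intro j hj
          rw [Finset.mem_range] at hj
          rw [gfun]
          have h1 : (m + 2 - j) + (2 ^ (m - j - 4) / (m - j) ^ 2 + 1 + 2)
              = (m + 5 - j) + 2 ^ (m - j - 4) / (m - j) ^ 2 := by omega
          calc (j + 1) + (m + 2 - j) * 2 ^ j + (2 ^ (m - j - 4) / (m - j) ^ 2 + 1 + 2) * 2 ^ j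
              = (j + 1) + ((m + 2 - j) + (2 ^ (m - j - 4) / (m - j) ^ 2 + 1 + 2)) * 2 ^ j := by
                ring
          _ = (j + 1) + ((m + 5 - j) + 2 ^ (m - j - 4) / (m - j) ^ 2) * 2 ^ j := by rw [h1]
          _ = ((j + 1) + (m + 5 - j) * 2 ^ j) + (2 ^ (m - j - 4) / (m - j) ^ 2) * 2 ^ j := by
                ring
        rw [Finset.sum_congr rfl hsplit, Finset.sum_add_distrib, Finset.sum_add_distrib]
        -- bound the three sums
        have hA : ∑ j ∈ Finset.range (m - 5), (j + 1) ≤ m * m := by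
          calc ∑ j ∈ Finset.range (m - 5), (j + 1)
              ≤ ∑ _j ∈ Finset.range (m - 5), m := by
                apply Finset.sum_le_sum
                intro j hj
                rw [Finset.mem_range] at hj
                omega
          _ = (m - 5) * m := by rw [Finset.sum_const, Finset.card_range, smul_eq_mul]
          _ ≤ m * m := Nat.mul_le_mul_right _ (by omega)
        have hB : ∑ j ∈ Finset.range (m - 5), (m + 5 - j) * 2 ^ j ≤ 12 * 2 ^ (m - 5) := by
          have hcg : ∀ j ∈ Finset.range (m - 5), (m + 5 - j) * 2 ^ j
              = 2 ^ j * (10 + (m - 5) - j) := by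
            intro j hj
            rw [Finset.mem_range] at hj
            rw [Nat.mul_comm]
            congr 1
            omega
          rw [Finset.sum_congr rfl hcg]
          exact sum_two_pow_mul 10 (m - 5)
        have hCreal : ((∑ j ∈ Finset.range (m - 5),
            (2 ^ (m - j - 4) / (m - j) ^ 2) * 2 ^ j : ℕ) : ℝ)
            ≤ ((2 ^ (m - 4) : ℕ) : ℝ) * (1 / 5) := by
          rw [Nat.cast_sum]
          calc ∑ j ∈ Finset.range (m - 5),
              ((2 ^ (m - j - 4) / (m - j) ^ 2 * 2 ^ j : ℕ) : ℝ)
              ≤ ∑ j ∈ Finset.range (m - 5),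
                ((2 ^ (m - 4) : ℕ) : ℝ) * (1 / ((m : ℝ) - (j : ℝ)) ^ 2) := by
                apply Finset.sum_le_sum
                intro j hj
                rw [Finset.mem_range] at hj
                have hjm : j ≤ m := by omega
                have hpos : (0 : ℝ) < (m : ℝ) - (j : ℝ) := by
                  rw [cast_sub_eq hjm]
                  exact_mod_cast (by omega : 0 < m - j)
                rw [Nat.cast_mul]
                have h1 : ((2 ^ (m - j - 4) / (m - j) ^ 2 : ℕ) : ℝ)
                    ≤ ((2 ^ (m - j - 4) : ℕ) : ℝ) / (((m - j) ^ 2 : ℕ) : ℝ) :=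
                  Nat.cast_div_le
                have h2 : (((m - j) ^ 2 : ℕ) : ℝ) = ((m : ℝ) - (j : ℝ)) ^ 2 := by
                  rw [cast_sub_eq hjm]
                  push_cast
                  ring
                have h3 : ((2 ^ (m - j - 4) : ℕ) : ℝ) * ((2 ^ j : ℕ) : ℝ)
                    = ((2 ^ (m - 4) : ℕ) : ℝ) := by
                  rw [← Nat.cast_mul, ← pow_add, show (m - j - 4) + j = m - 4 by omega]
                calc ((2 ^ (m - j - 4) / (m - j) ^ 2 : ℕ) : ℝ) * ((2 ^ j : ℕ) : ℝ)
                    ≤ (((2 ^ (m - j - 4) : ℕ) : ℝ) / (((m - j) ^ 2 : ℕ) : ℝ))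
                      * ((2 ^ j : ℕ) : ℝ) :=
                      mul_le_mul_of_nonneg_right h1 (by positivity)
                _ = ((2 ^ (m - 4) : ℕ) : ℝ) * (1 / ((m : ℝ) - (j : ℝ)) ^ 2) := by
                    rw [h2, div_mul_eq_mul_div, h3]
                    ring
          _ = ((2 ^ (m - 4) : ℕ) : ℝ)
              * ∑ j ∈ Finset.range (m - 5), (1 / ((m : ℝ) - (j : ℝ)) ^ 2) := by
              rw [Finset.mul_sum]
          _ ≤ ((2 ^ (m - 4) : ℕ) : ℝ) * (1 / 5) := by
              apply mul_le_mul_of_nonneg_left (sum_inv_sq_le hm) (by positivity)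
        -- final arithmetic over ℝ
        have hmsq := msq_le_two_pow hm13
        have hpow1 : (2 : ℕ) ^ (m - 4) = 2 * 2 ^ (m - 5) := by
          rw [show m - 4 = (m - 5) + 1 by omega, pow_succ]
          ring
        have hpow2 : (2 : ℕ) ^ (m - 1) = 16 * 2 ^ (m - 5) := by
          rw [show m - 1 = (m - 5) + 4 by omega, pow_add]
          ring
        set SA := ∑ j ∈ Finset.range (m - 5), (j + 1) with hSA
        set SB := ∑ j ∈ Finset.range (m - 5), (m + 5 - j) * 2 ^ j with hSB
        set SC := ∑ j ∈ Finset.range (m - 5), (2 ^ (m - j - 4) / (m - j) ^ 2) * 2 ^ j with hSC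
        have hgoalR : ((SA + SB + SC : ℕ) : ℝ) ≤ ((2 ^ (m - 1) - 1 : ℕ) : ℝ) := by
          have hc1 : ((SA : ℕ) : ℝ) ≤ (m : ℝ) * m := by exact_mod_cast hA
          have hc2 : ((SB : ℕ) : ℝ) ≤ 12 * ((2 ^ (m - 5) : ℕ) : ℝ) := by exact_mod_cast hB
          have hc3 : ((SC : ℕ) : ℝ) ≤ ((2 ^ (m - 4) : ℕ) : ℝ) * (1 / 5) := hCreal
          have hc4 : (m : ℝ) * m + 1 ≤ ((2 ^ (m - 4) : ℕ) : ℝ) := by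
            have : (m * m + 1 : ℕ) ≤ 2 ^ (m - 4) := by
              have : m ^ 2 = m * m := sq m
              omega
            exact_mod_cast this
          have hc5 : ((2 ^ (m - 4) : ℕ) : ℝ) = 2 * ((2 ^ (m - 5) : ℕ) : ℝ) := by
            exact_mod_cast hpow1
          have hc6 : ((2 ^ (m - 1) - 1 : ℕ) : ℝ) = 16 * ((2 ^ (m - 5) : ℕ) : ℝ) - 1 := by
            rw [Nat.cast_sub (Nat.one_le_two_pow), hpow2]
            push_cast
            ring
          have hc7 : (0 : ℝ) ≤ ((2 ^ (m - 5) : ℕ) : ℝ) := Nat.cast_nonneg _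
          push_cast only [Nat.cast_add]
          rw [hc6]
          push_cast at hc1 hc2 hc3 hc4 hc5 hc7 ⊢
          linarith
        have := (Nat.cast_le (α := ℝ)).mp hgoalR
        omega
      calc Ω.card ≤ (Fintype.piFinset fun jj : Fin (m - 5) => T (jj : ℕ)).card := hinj
      _ = ∏ jj : Fin (m - 5), (T (jj : ℕ)).card := Fintype.card_piFinset _
      _ ≤ ∏ jj : Fin (m - 5), 2 ^ (((jj : ℕ) + 1) + (m + 2 - (jj : ℕ)) * 2 ^ (jj : ℕ)
            + (gfun m (jj : ℕ) + 2) * 2 ^ (jj : ℕ)) :=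
          Finset.prod_le_prod' (fun jj _ => hTcard jj)
      _ = 2 ^ (∑ jj : Fin (m - 5), (((jj : ℕ) + 1) + (m + 2 - (jj : ℕ)) * 2 ^ (jj : ℕ)
            + (gfun m (jj : ℕ) + 2) * 2 ^ (jj : ℕ))) := by
          rw [Finset.prod_pow_eq_pow_sum]
      _ = 2 ^ (∑ j ∈ Finset.range (m - 5),
            ((j + 1) + (m + 2 - j) * 2 ^ j + (gfun m j + 2) * 2 ^ j)) := by
          rw [Fin.sum_univ_eq_sum_range
            (fun j => (j + 1) + (m + 2 - j) * 2 ^ j + (gfun m j + 2) * 2 ^ j) (m - 5)]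
      _ ≤ 2 ^ (2 ^ (m - 1) - 1) := Nat.pow_le_pow_right (by norm_num) hsumE
    · -- COVERING
      intro x hx
      have Hx : ∀ j, j ≤ m - 5 →
          (Finset.univ.filter fun i => Bfun m j < |x i|).card ≤ ind j := by
        intro j hj
        have hlt : ind j < 2 ^ m := by
          simp only [hind]
          split
          · exact hnpos
          · exact Nat.pow_lt_pow_right (by norm_num) (by omega)
        exact filter_abs_card_le x _ ⟨ind j, hlt⟩ (hx j hj ⟨ind j, hlt⟩ rfl)
      set z : Fin (2 ^ m) → ℤ := fun i => 8 * round (x i / 8) with hz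
      have herr : ∀ i, |x i - ((z i : ℤ) : ℝ)| ≤ 4 := fun i => round_eight (x i)
      have habs : ∀ i, |((z i : ℤ) : ℝ)| ≤ |x i| + 4 := by
        intro i
        have h1 := herr i
        have h2 : |((z i : ℤ) : ℝ)| - |x i| ≤ |x i - ((z i : ℤ) : ℝ)| := by
          rw [abs_sub_comm]
          exact abs_sub_abs_le_abs_sub _ _
        linarith
      have hx0 : ∀ i, |x i| ≤ Bfun m 0 := by
        intro i
        have h := Hx 0 (by omega)
        simp only [hind, if_pos rfl, Nat.le_zero, Finset.card_eq_zero,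
          Finset.filter_eq_empty_iff] at h
        have := h (Finset.mem_univ i)
        linarith [not_lt.mp this]
      have hmem : z ∈ Ω := by
        rw [hΩ, Finset.mem_filter]
        constructor
        · rw [Fintype.mem_piFinset]
          intro i
          rw [Finset.mem_Icc]
          have h1 : |((z i : ℤ) : ℝ)| ≤ ((K : ℤ) : ℝ) := by
            have := habs i
            have := hx0 i
            have := hcle 0 (by omega)
            simp only [hc] at *
            linarith
          have h2 : |z i| ≤ K := by
            rw [← Int.cast_abs] at h1
            exact_mod_cast h1
          constructor <;> [linarith [abs_le.mp h2]; exact (abs_le.mp h2).2]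
        · constructor
          · intro i; exact ⟨round (x i / 8), rfl⟩
          · intro j hj
            refine le_trans (Finset.card_le_card ?_) (Hx j hj)
            intro i hi
            simp only [Finset.mem_filter, Finset.mem_univ, true_and] at hi ⊢
            have := habs i
            simp only [hc] at hi
            linarith
      exact ⟨z, hmem, herr⟩
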